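/- Let A be an n × n matrix over the ring of integers ℤ. Then A is the sum of an idempotent matrix and a nilpotent matrix that commute if and only if the characteristic polynomial of A is χ(A) = t^s(t − 1)^r for some integers s, r ≥ 0 with s + r = n. -/

import Mathlib

open Polynomial

universe u

/-- The Jacobson radical of a ring: the intersection of all maximal (left) ideals. -/
def jacobsonRadical (R : Type*) [Ring R] : Ideal R := Ideal.jacobson (⊥ : Ideal R)

/-- `J^#(R) = {x ∈ R : x ^ n ∈ J(R) for some n ∈ ℕ}`. -/
def Jsharp (R : Type*) [Ring R] : Set R :=
  {x | ∃ n : ℕ, 0 < n ∧ x ^ n ∈ jacobsonRadical R}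

/-- An element `a` is strongly `J^#`-clean if `a = e + u` with `e` idempotent,
`u ∈ J^#(R)` and `e * a = a * e`. -/
def IsStronglyJsharpClean {R : Type*} [Ring R] (a : R) : Prop :=
  ∃ e : R, IsIdempotentElem e ∧ a - e ∈ Jsharp R ∧ e * a = a * e

/-- A commutative ring is projective-free if every finitely generated projective
module is free. -/
def IsProjectiveFree (R : Type u) [CommRing R] : Prop :=
  ∀ (M : Type u) [AddCommGroup M] [Module R M],
    Module.Finite R M → Module.Projective R M → Module.Free R M

/-- `𝕁_r`: monic polynomials congruent to `(t - r) ^ deg f` modulo `J^#(R)`. -/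
def Jpoly {R : Type*} [CommRing R] (r : R) : Set R[X] :=
  {f | f.Monic ∧ ∀ i, (f - (X - C r) ^ f.natDegree).coeff i ∈ Jsharp R}


lemma aux_eig_pow {K : Type*} [Field K] {n : ℕ} {B : Matrix (Fin n) (Fin n) K} {z : K}
    {v : Fin n → K} (h : B.mulVec v = z • v) (k : ℕ) :
    (B ^ k).mulVec v = z ^ k • v := by
  induction k with
  | zero => simp [Matrix.one_mulVec]
  | succ k ih =>
    rw [pow_succ', pow_succ', ← Matrix.mulVec_mulVec, ih, Matrix.mulVec_smul, h, smul_smul,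
      mul_comm]

lemma aux_eval_charpoly {K : Type*} [CommRing K] {n : ℕ} (B : Matrix (Fin n) (Fin n) K)
    (z : K) : B.charpoly.eval z = (z • (1 : Matrix (Fin n) (Fin n) K) - B).det := by
  have h1 : (evalRingHom z) B.charmatrix.det = ((evalRingHom z).mapMatrix B.charmatrix).det :=
    RingHom.map_det _ _
  rw [Matrix.charpoly]
  show (evalRingHom z) B.charmatrix.det = _
  rw [h1, RingHom.mapMatrix_apply]
  congr 1
  ext i j
  by_cases h : i = j
  · subst h
    simp [Matrix.charmatrix_apply_eq, Matrix.one_apply]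
  · simp [Matrix.charmatrix_apply_ne _ _ _ h, Matrix.one_apply, h]

lemma aux_root_mem {K : Type*} [Field K] {n : ℕ} {B : Matrix (Fin n) (Fin n) K} {m : ℕ}
    (hB : B ^ (m + 1) * (B - 1) ^ (m + 1) = 0) {z : K} (hz : z ∈ B.charpoly.roots) :
    z = 0 ∨ z = 1 := by
  have hz0 : B.charpoly.eval z = 0 := (Polynomial.isRoot_of_mem_roots hz)
  rw [aux_eval_charpoly] at hz0
  obtain ⟨v, hv, hmul⟩ := Matrix.exists_mulVec_eq_zero_iff.mpr hz0
  have hBv : B.mulVec v = z • v := by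
    have := hmul
    rw [Matrix.sub_mulVec, sub_eq_zero] at this
    rw [← this, Matrix.smul_mulVec, Matrix.one_mulVec]
  have hB1v : (B - 1).mulVec v = (z - 1) • v := by
    rw [Matrix.sub_mulVec, hBv, Matrix.one_mulVec, sub_smul, one_smul]
  have key : (z ^ (m+1) * (z - 1) ^ (m+1)) • v = 0 := by
    have h1 : (B ^ (m+1) * (B-1) ^ (m+1)).mulVec v = 0 := by rw [hB]; simp
    rw [← Matrix.mulVec_mulVec, aux_eig_pow hB1v, Matrix.mulVec_smul, aux_eig_pow hBv,
      smul_smul, mul_comm] at h1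
    exact h1
  have hc : z ^ (m+1) * (z - 1) ^ (m+1) = 0 := by
    by_contra hne
    exact hv (by
      funext i
      have := congrFun key i
      simpa [hne] using this)
  rcases mul_eq_zero.mp hc with h | h
  · exact Or.inl (pow_eq_zero_iff (Nat.succ_ne_zero m) |>.mp h)
  · exact Or.inr (sub_eq_zero.mp (pow_eq_zero_iff (Nat.succ_ne_zero m) |>.mp h))

lemma aux_factor {K : Type*} [Field K] [IsAlgClosed K] [DecidableEq K] {p : K[X]} (hm : p.Monic)
    (hroots : ∀ z ∈ p.roots, z = 0 ∨ z = 1) :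
    ∃ s r : ℕ, s + r = p.natDegree ∧ p = X ^ s * (X - 1) ^ r := by
  have hs : Splits p := IsAlgClosed.splits p
  set s := p.roots.count 0 with hsdef
  set r := p.roots.count 1 with hrdef
  have hms : p.roots = Multiset.replicate s 0 + Multiset.replicate r 1 := by
    ext a
    rw [Multiset.count_add, Multiset.count_replicate, Multiset.count_replicate]
    by_cases h0 : a = 0
    · subst h0; simp [hsdef]
    · by_cases h1 : a = 1
      · subst h1; simp [hrdef]
      · have hnot : a ∉ p.roots := fun hmem => by
          rcases hroots a hmem with h | h <;> [exact h0 h; exact h1 h]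
        simp [Multiset.count_eq_zero.mpr hnot, Ne.symm h0, Ne.symm h1]
  refine ⟨s, r, ?_, ?_⟩
  · have hcard := (Polynomial.splits_iff_card_roots).mp hs
    rw [hms] at hcard
    simpa using hcard
  · have hp := hs.eq_prod_roots_of_monic hm
    rw [hms] at hp
    simpa [Multiset.map_add, Multiset.prod_add, Multiset.map_replicate,
      Multiset.prod_replicate] using hp


/-- an integer matrix is the sum of an idempotent and a nilpotent
that commute iff its characteristic polynomial is `t ^ s * (t - 1) ^ r` with `s + r = n`. -/
theorem matrix_int_idempotent_add_nilpotent_iff {n : ℕ}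
    (A : Matrix (Fin n) (Fin n) ℤ) :
    (∃ E W : Matrix (Fin n) (Fin n) ℤ,
        IsIdempotentElem E ∧ IsNilpotent W ∧ E * W = W * E ∧ A = E + W) ↔
      ∃ s r : ℕ, s + r = n ∧ A.charpoly = X ^ s * (X - 1) ^ r := by
  constructor
  · rintro ⟨E, W, hE, hW, hEW, rfl⟩
    have hcWE : Commute W E := hEW.symm
    have key : (E + W) * (E + W - 1) = W * (E + E + W - 1) := by
      have h1 : (E + W) * (E + W - 1) = E * E + E * W + W * E + W * W - E - W := by
        noncomm_ring
      rw [h1, hE.eq, hEW]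
      noncomm_ring
    have hc : Commute W (E + E + W - 1) :=
      ((hcWE.add_right hcWE).add_right (Commute.refl W)).sub_right (Commute.one_right W)
    have hN : IsNilpotent ((E + W) * (E + W - 1)) := by
      rw [key]; exact hc.isNilpotent_mul_right hW
    obtain ⟨m, hm⟩ := hN
    have hm1 : ((E + W) * (E + W - 1)) ^ (m + 1) = 0 := by rw [pow_succ, hm, zero_mul]
    have hcomm2 : Commute (E + W) (E + W - 1) :=
      (Commute.refl (E + W)).sub_right (Commute.one_right _)
    have hAm : (E + W) ^ (m + 1) * (E + W - 1) ^ (m + 1) = 0 := by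
      rw [← hcomm2.mul_pow, hm1]
    set K := AlgebraicClosure ℚ
    let f : ℤ →+* K := Int.castRingHom K
    let F : Matrix (Fin n) (Fin n) ℤ →+* Matrix (Fin n) (Fin n) K := f.mapMatrix
    set B := F (E + W) with hB
    have hBm : B ^ (m + 1) * (B - 1) ^ (m + 1) = 0 := by
      have h2 := congrArg F hAm
      simpa only [map_mul, map_pow, map_sub, map_one, map_zero, ← hB] using h2
    have hroots : ∀ z ∈ B.charpoly.roots, z = 0 ∨ z = 1 := fun z hz => aux_root_mem hBm hz
    obtain ⟨s, r, hsr, hfac⟩ := @aux_factor K _ _ (Classical.decEq K) _ (B.charpoly_monic) hroots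
    refine ⟨s, r, ?_, ?_⟩
    · rw [hsr, Matrix.charpoly_natDegree_eq_dim, Fintype.card_fin]
    · have hmapinj : Function.Injective (Polynomial.map f) :=
        Polynomial.map_injective f (fun a b hab => Int.cast_injective hab)
      apply hmapinj
      have hcm : ((E + W).charpoly).map f = B.charpoly := by
        rw [hB, RingHom.mapMatrix_apply, Matrix.charpoly_map]
      rw [hcm, hfac]
      simp [Polynomial.map_mul, Polynomial.map_pow, Polynomial.map_sub]
  · rintro ⟨s, r, hsr, hchar⟩
    obtain ⟨u, v, huv⟩ :=
      (IsCoprime.pow (⟨1, -1, by ring⟩ : IsCoprime (X : ℤ[X]) (X - 1)) :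
        IsCoprime ((X : ℤ[X]) ^ s) ((X - 1) ^ r))
    set φ : ℤ[X] →ₐ[ℤ] Matrix (Fin n) (Fin n) ℤ := aeval A with hφ
    have hχ : φ (X ^ s * (X - 1) ^ r) = 0 := by
      rw [← hchar]; exact Matrix.aeval_self_charpoly A
    have hA : φ X = A := aeval_X A
    have hcomm : ∀ p q : ℤ[X], φ p * φ q = φ q * φ p := fun p q => by
      rw [← map_mul, ← map_mul, mul_comm]
    refine ⟨φ (u * X ^ s), A - φ (u * X ^ s), ?_, ?_, ?_, by abel⟩
    · -- idempotent
      have h0 : φ (u * X ^ s) * φ (v * (X - 1) ^ r) = 0 := by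
        rw [← map_mul]
        have heq : (u * X ^ s) * (v * (X - 1) ^ r) = (u * v) * (X ^ s * (X - 1) ^ r) := by ring
        rw [heq, map_mul, hχ, mul_zero]
      have hsplit : φ (u * X ^ s) + φ (v * (X - 1) ^ r) = 1 := by
        rw [← map_add, huv, map_one]
      show φ (u * X ^ s) * φ (u * X ^ s) = φ (u * X ^ s)
      calc φ (u * X ^ s) * φ (u * X ^ s)
          = φ (u * X ^ s) * (φ (u * X ^ s) + φ (v * (X - 1) ^ r))
            - φ (u * X ^ s) * φ (v * (X - 1) ^ r) := by noncomm_ring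
        _ = φ (u * X ^ s) := by rw [hsplit, h0, mul_one, sub_zero]
    · -- nilpotent
      have hWeq : A - φ (u * X ^ s) = φ (X * (v * (X - 1) ^ r)) + φ ((X - 1) * (u * X ^ s)) := by
        rw [← map_add, ← hA, ← map_sub]
        congr 1
        have h1 : v * (X - 1) ^ r = 1 - u * X ^ s := by linear_combination huv
        rw [h1]; ring
      rw [hWeq]
      have hP : IsNilpotent (φ (X * (v * (X - 1) ^ r))) := by
        refine ⟨s + 1, ?_⟩
        rw [← map_pow]
        have heq : (X * (v * (X - 1) ^ r)) ^ (s + 1)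
            = (X ^ s * (X - 1) ^ r) * (X * v ^ (s + 1) * ((X - 1) ^ r) ^ s) := by
          rw [mul_pow, mul_pow]; ring
        rw [heq, map_mul, hχ, zero_mul]
      have hQ : IsNilpotent (φ ((X - 1) * (u * X ^ s))) := by
        refine ⟨r + 1, ?_⟩
        rw [← map_pow]
        have heq : ((X - 1) * (u * X ^ s)) ^ (r + 1)
            = (X ^ s * (X - 1) ^ r) * ((X - 1) * u ^ (r + 1) * (X ^ s) ^ r) := by
          rw [mul_pow, mul_pow]; ring
        rw [heq, map_mul, hχ, zero_mul]
      exact (Commute.isNilpotent_add (hcomm _ _) hP hQ)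
    · -- commute
      have hWeq : A - φ (u * X ^ s) = φ (X - u * X ^ s) := by
        rw [map_sub, hA]
      rw [hWeq]
      exact hcomm _ _
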